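/- Let h₁, h₂ ∈ ℂ^M be nonzero vectors that are not parallel, i.e. sin²α := 1 − |h₁ᴴh₂|²/(‖h₁‖²‖h₂‖²) > 0, let r₁, r₂ ≥ 0 be SNR targets and σ² > 0 the noise power. Then the minimum NOMA transmission power P^NOMA = r₁(1+r₂)σ²/(‖h₁‖²(1+r₂ sin²α)) + r₂σ²/‖h₂‖² is at most the minimum ZFBF transmission power P^ZFBF = (σ²/sin²α)·(r₁/‖h₁‖² + r₂/‖h₂‖²). -/
import Mathlib


open scoped InnerProductSpace

/-- Theorem 1 of the paper: with the same channels (same IRS phase shift matrix) and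
quasi-degraded channels, `P^NOMA ≤ P^ZFBF`. -/
theorem stmt_0 (M : ℕ) (h₁ h₂ : EuclideanSpace ℂ (Fin M))
    (hh₁ : h₁ ≠ 0) (hh₂ : h₂ ≠ 0)
    (r₁ r₂ σsq : ℝ) (hr₁ : 0 ≤ r₁) (hr₂ : 0 ≤ r₂) (hσ : 0 < σsq)
    (s : ℝ) (hs : s = 1 - ‖⟪h₁, h₂⟫_ℂ‖ ^ 2 / (‖h₁‖ ^ 2 * ‖h₂‖ ^ 2))
    (hspos : 0 < s) :
    r₁ * (1 + r₂) * σsq / (‖h₁‖ ^ 2 * (1 + r₂ * s)) + r₂ * σsq / ‖h₂‖ ^ 2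
      ≤ (σsq / s) * (r₁ / ‖h₁‖ ^ 2 + r₂ / ‖h₂‖ ^ 2) := by
  have ha : 0 < ‖h₁‖ ^ 2 := pow_pos (norm_pos_iff.mpr hh₁) 2
  have hb : 0 < ‖h₂‖ ^ 2 := pow_pos (norm_pos_iff.mpr hh₂) 2
  have hs1 : s ≤ 1 := by
    rw [hs]
    have : 0 ≤ ‖⟪h₁, h₂⟫_ℂ‖ ^ 2 / (‖h₁‖ ^ 2 * ‖h₂‖ ^ 2) := by positivity
    linarith
  have hd : 0 < 1 + r₂ * s := by positivity
  rw [div_add_div _ _ (by positivity) (ne_of_gt hb), div_add_div _ _ (ne_of_gt ha) (ne_of_gt hb),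
    div_mul_div_comm, div_le_div_iff₀ (by positivity) (by positivity)]
  nlinarith [mul_nonneg (mul_nonneg (mul_nonneg hσ.le (mul_pos ha hb).le) (sub_nonneg.2 hs1))
    (add_nonneg (mul_nonneg hr₁ hb.le) (mul_nonneg (mul_nonneg hr₂ ha.le) hd.le))]
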